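/- (Restricted marking informativity is closed under union) If (D, D_m, D⁻) is K₁-informative and K₂-informative, then it is (K₁ ∪ K₂)-informative. Here (D, D_m, D⁻) is K-informative means K ⊆ D_m ∩ E and for all s ∈ cl(K) and σ ∈ Σᵤ, sσ ∈ cl(K) ∪ D⁻. -/
import Mathlib

/-- Prefix closure of a language over alphabet `A`. -/
def cl {A : Type*} (L : Set (List A)) : Set (List A) := {s | ∃ t, s ++ t ∈ L}

/-- (D, Dm, Dneg) is K-informative for specification E. -/
def KInformative {A : Type*} (Su : Set A) (Dm E Dneg K : Set (List A)) : Prop :=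
  K ⊆ Dm ∩ E ∧ ∀ s ∈ cl K, ∀ σ ∈ Su, s ++ [σ] ∈ cl K ∪ Dneg

theorem KInformative_union {A : Type*} [Fintype A]
    (Sc Su : Set A) (hpart : Sc ∪ Su = Set.univ)
    (D Dm Dneg E : Set (List A)) (hDm : Dm ⊆ cl D) (hdisj : cl D ∩ Dneg = ∅)
    (K₁ K₂ : Set (List A))
    (h₁ : KInformative Su Dm E Dneg K₁) (h₂ : KInformative Su Dm E Dneg K₂) :
    KInformative Su Dm E Dneg (K₁ ∪ K₂) := by
  obtain ⟨hs₁, hc₁⟩ := h₁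
  obtain ⟨hs₂, hc₂⟩ := h₂
  constructor
  · exact Set.union_subset hs₁ hs₂
  · intro s hs σ hσ
    have hcl : cl (K₁ ∪ K₂) = cl K₁ ∪ cl K₂ := by
      ext x; constructor
      · rintro ⟨t, ht | ht⟩
        · exact Or.inl ⟨t, ht⟩
        · exact Or.inr ⟨t, ht⟩
      · rintro (⟨t, ht⟩ | ⟨t, ht⟩)
        · exact ⟨t, Or.inl ht⟩
        · exact ⟨t, Or.inr ht⟩
    rw [hcl] at hs ⊢
    rcases hs with hs | hs
    · rcases hc₁ s hs σ hσ with h | h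
      · exact Or.inl (Or.inl h)
      · exact Or.inr h
    · rcases hc₂ s hs σ hσ with h | h
      · exact Or.inl (Or.inr h)
      · exact Or.inr h
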